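/- Let p, b, q ∈ ℂ. For j ≥ 1 set β_j = −j((j+1)/2 · b + (j−1)/2 · p + q) and γ_j = j! (q−p) ((−p−b)/2)^{j−1}, and for integers 0 ≤ j ≤ i set P_i^j = i!/(i−j)!. For n ≥ 1 let M_n be the (n+1)×(n+1) complex matrix defined as follows: for rows i ∈ {1, …, n}: the (i,1) entry is ∏_{s=n−i+1}^{n} β_s; for 1 ≤ j ≤ i the (i, j+1) entry is P_i^j · ∏_{s=n−i+1}^{n−j} β_s (an empty product being 1, so the (i, i+1) entry is P_i^i = i!); and the (i, j+1) entry is 0 for j > i; the last row (row n+1) is (γ_n, γ_{n−1}, …, γ_1, 1). Then det M_n = C(n+1, 2) · (p − b − 2q) · ∏_{j=1}^{n−1} j! β_j, where C(n+1,2) = n(n+1)/2 is the binomial coefficient. -/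

import Mathlib

open Finset

/-- `β_j = −j((j+1)/2 · b + (j−1)/2 · p + q)`. -/
noncomputable def β (p b q : ℂ) (j : ℕ) : ℂ :=
  -(j : ℂ) * (((j : ℂ) + 1) / 2 * b + ((j : ℂ) - 1) / 2 * p + q)

/-- `γ_j = j! (q−p) ((−p−b)/2)^{j−1}`. -/
noncomputable def γ (p b q : ℂ) (j : ℕ) : ℂ :=
  (Nat.factorial j : ℂ) * (q - p) * ((-p - b) / 2) ^ (j - 1)

/-- The `(n+1) × (n+1)` matrix `M_n` (rows and columns indexed by `Fin (n+1)`,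
corresponding to `1`-based indices `i+1` and `c+1`).  For `1`-based row `i ∈ {1,…,n}` and
column `j+1` with `0 ≤ j ≤ i` the entry is `P_i^j ∏_{s=n−i+1}^{n−j} β_s`
(where `P_i^j = i!/(i−j)!` is the descending factorial), and `0` for `j > i`;
the last row is `(γ_n, γ_{n−1}, …, γ_1, 1)`. -/
noncomputable def M (p b q : ℂ) (n : ℕ) : Matrix (Fin (n + 1)) (Fin (n + 1)) ℂ :=
  fun i c =>
    if (i : ℕ) < n then
      if (c : ℕ) ≤ (i : ℕ) + 1 then
        ((((i : ℕ) + 1).descFactorial (c : ℕ) : ℕ) : ℂ) *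
          ∏ s ∈ Finset.Icc (n - ((i : ℕ) + 1) + 1) (n - (c : ℕ)), β p b q s
      else 0
    else
      if (c : ℕ) < n then γ p b q (n - (c : ℕ)) else 1


open Finset

-- alternating sum of binomials in ℂ
lemma alt_sum_choose (m : ℕ) :
    ∑ t ∈ range (m + 1), (-1 : ℂ) ^ t * (m.choose t : ℂ) = if m = 0 then 1 else 0 := by
  have h := Int.alternating_sum_range_choose (n := m)
  have h2 : ((∑ t ∈ range (m + 1), ((-1) ^ t * m.choose t : ℤ) : ℤ) : ℂ)
      = if m = 0 then 1 else 0 := by rw [h]; split <;> simp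
  push_cast at h2
  exact h2

-- the key binomial identity for row reduction
lemma key_binom (i c : ℕ) :
    ∑ j ∈ Finset.range (i + 1),
      (-1 : ℂ) ^ (i + j) * (((i + 1).choose (j + 1) : ℕ) : ℂ) * (((j + 1).descFactorial c : ℕ) : ℂ)
    = if c = 0 then (-1 : ℂ) ^ i else if c = i + 1 then ((i + 1).factorial : ℂ) else 0 := by
  by_cases hc0 : c = 0
  · subst hc0
    rw [if_pos rfl]
    simp only [Nat.descFactorial_zero, Nat.cast_one, mul_one]
    have : ∑ j ∈ range (i + 1), (-1 : ℂ) ^ (i + j) * (((i + 1).choose (j + 1) : ℕ) : ℂ)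
        = (-1:ℂ)^i * ∑ j ∈ range (i + 1), (-1 : ℂ) ^ j * (((i + 1).choose (j + 1) : ℕ) : ℂ) := by
      rw [Finset.mul_sum]; apply Finset.sum_congr rfl; intro j _; rw [pow_add]; ring
    rw [this]
    have h2 : ∑ j ∈ range (i + 2), (-1 : ℂ) ^ j * ((i+1).choose j : ℂ) = 0 := by
      rw [alt_sum_choose (i+1)]; simp
    rw [Finset.sum_range_succ'] at h2
    simp only [Nat.choose_zero_right, Nat.cast_one, pow_zero, one_mul] at h2
    have h3 : ∑ j ∈ range (i + 1), (-1 : ℂ) ^ (j+1) * ((i+1).choose (j+1) : ℂ) = -1 := by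
      linear_combination h2
    have h4 : ∑ j ∈ range (i + 1), (-1 : ℂ) ^ j * ((i+1).choose (j+1) : ℂ) = 1 := by
      have : ∀ j ∈ range (i+1), (-1 : ℂ) ^ j * ((i+1).choose (j+1) : ℂ)
          = -((-1 : ℂ) ^ (j+1) * ((i+1).choose (j+1) : ℂ)) := by
        intro j _; ring
      rw [Finset.sum_congr rfl this, Finset.sum_neg_distrib, h3]; ring
    rw [h4]; ring
  · by_cases hci : c ≤ i + 1
    · -- main case 1 ≤ c ≤ i+1
      have hc1 : 1 ≤ c := Nat.one_le_iff_ne_zero.mpr hc0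
      -- restrict the sum to j ∈ Ico (c-1) (i+1)
      have hsub : Ico (c - 1) (i + 1) ⊆ range (i + 1) := by
        intro t ht; simp only [mem_Ico] at ht; simp [ht.2]
      rw [← Finset.sum_subset hsub (by
        intro j hj hj'
        simp only [mem_Ico, mem_range, not_and, not_le, not_lt] at hj hj'
        have : j + 1 < c := by omega
        rw [Nat.descFactorial_eq_zero_iff_lt.mpr this]
        simp)]
      have hcongr : ∀ j ∈ Ico (c-1) (i+1),
          (-1 : ℂ) ^ (i + j) * (((i + 1).choose (j + 1) : ℕ) : ℂ) * (((j + 1).descFactorial c : ℕ) : ℂ)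
          = ((c.factorial : ℂ) * ((i+1).choose c : ℂ)) *
            ((-1 : ℂ) ^ (i + j) * (((i + 1 - c).choose (j + 1 - c) : ℕ) : ℂ)) := by
        intro j hj
        simp only [mem_Ico] at hj
        have hcj : c ≤ j + 1 := by omega
        have hdesc : ((j + 1).descFactorial c : ℕ) = c.factorial * (j+1).choose c :=
          Nat.descFactorial_eq_factorial_mul_choose _ _
        have htri : (i+1).choose (j+1) * (j+1).choose c = (i+1).choose c * (i+1-c).choose (j+1-c) :=
          Nat.choose_mul hcj
        push_cast [hdesc]
        have : ((i+1).choose (j+1) : ℂ) * ((j+1).choose c : ℂ)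
            = ((i+1).choose c : ℂ) * ((i+1-c).choose (j+1-c) : ℂ) := by
          have h9 : (((i+1).choose (j+1) * (j+1).choose c : ℕ) : ℂ)
              = (((i+1).choose c * (i+1-c).choose (j+1-c) : ℕ) : ℂ) := by rw [htri]
          push_cast at h9; exact h9
        linear_combination ((-1:ℂ)^(i+j) * (c.factorial:ℂ)) * this
      rw [Finset.sum_congr rfl hcongr, ← Finset.mul_sum]
      -- reindex: j = c - 1 + t
      rw [Finset.sum_Ico_eq_sum_range]
      have hlen : i + 1 - (c - 1) = (i + 1 - c) + 1 := by omega
      rw [hlen]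
      have hre : ∀ t ∈ range ((i + 1 - c) + 1),
          (-1 : ℂ) ^ (i + (c - 1 + t)) * (((i + 1 - c).choose (c - 1 + t + 1 - c) : ℕ) : ℂ)
          = (-1:ℂ)^(i + c - 1) * ((-1:ℂ)^t * (((i + 1 - c).choose t : ℕ) : ℂ)) := by
        intro t _
        have h1 : c - 1 + t + 1 - c = t := by omega
        have h2 : i + (c - 1 + t) = (i + c - 1) + t := by omega
        rw [h1, h2, pow_add]; ring
      rw [Finset.sum_congr rfl hre, ← Finset.mul_sum, alt_sum_choose (i + 1 - c)]
      by_cases hc : c = i + 1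
      · subst hc
        rw [if_neg hc0, if_pos rfl, Nat.sub_self, if_pos rfl, Nat.choose_self]
        have he : i + (i + 1) - 1 = 2 * i := by omega
        rw [he, pow_mul]
        norm_num
      · have : i + 1 - c ≠ 0 := by omega
        rw [if_neg this, if_neg hc0, if_neg hc]
        ring
    · -- c > i + 1 : all terms vanish
      push_neg at hci
      rw [if_neg hc0, if_neg (by omega)]
      apply Finset.sum_eq_zero
      intro j hj
      simp only [mem_range] at hj
      rw [Nat.descFactorial_eq_zero_iff_lt.mpr (by omega)]
      simp
open Finset

lemma key_sum (x y : ℂ) (N : ℕ) : ∀ m, m ≤ N →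
    ∑ j ∈ Icc 1 m, (-1:ℂ)^j * x^(j-1) * ((N+1).descFactorial j : ℂ) *
        ∏ s ∈ Icc (j+1) (N+1), ((s:ℂ)*x - y)
    = -((N:ℂ)+1) * (∏ j ∈ Icc 1 N, ((j:ℂ)*x - y))
      + (-1:ℂ)^m * ((N+1).descFactorial (m+1) : ℂ) * x^m * ∏ s ∈ Icc (m+1) N, ((s:ℂ)*x - y) := by
  intro m
  induction m with
  | zero =>
    intro _
    rw [show Icc 1 0 = (∅ : Finset ℕ) by simp]
    simp only [Finset.prod_empty, Finset.sum_empty, pow_zero, one_mul, mul_one, zero_add,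
      Nat.descFactorial_one]
    push_cast
    ring
  | succ m ih =>
    intro hm
    have hm' : m ≤ N := by omega
    rw [Finset.sum_Icc_succ_top (by omega : 1 ≤ m + 1), ih hm']
    have f1 : (∏ s ∈ Icc (m+1) N, ((s:ℂ)*x - y))
        = (((m:ℂ)+1)*x - y) * ∏ s ∈ Icc (m+2) N, ((s:ℂ)*x - y) := by
      rw [← Finset.Ico_add_one_right_eq_Icc (m+1) N, Finset.prod_eq_prod_Ico_succ_bot (by omega : m + 1 < N + 1),
        Finset.Ico_add_one_right_eq_Icc]
      push_cast
      ring
    have f2 : (∏ s ∈ Icc (m+2) (N+1), ((s:ℂ)*x - y))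
        = (∏ s ∈ Icc (m+2) N, ((s:ℂ)*x - y)) * (((N:ℂ)+1)*x - y) := by
      rw [Finset.prod_Icc_succ_top (by omega : m + 2 ≤ N + 1)]
      push_cast
      ring
    have f3 : ((N+1).descFactorial (m+2) : ℂ)
        = ((N:ℂ) - (m:ℂ)) * ((N+1).descFactorial (m+1) : ℂ) := by
      rw [show m + 2 = (m+1) + 1 from rfl, Nat.descFactorial_succ]
      have : N + 1 - (m + 1) = N - m := by omega
      rw [this]
      push_cast [Nat.cast_sub hm']
      ring
    rw [f1, f2, f3]
    have hj1 : m + 1 - 1 = m := by omega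
    rw [hj1]
    ring

lemma key_full (x y : ℂ) (N : ℕ) :
    ∑ j ∈ Icc 1 (N+1), (-1:ℂ)^j * x^(j-1) * ((N+1).descFactorial j : ℂ) *
        ∏ s ∈ Icc (j+1) (N+1), ((s:ℂ)*x - y)
    = -((N:ℂ)+1) * ∏ j ∈ Icc 1 N, ((j:ℂ)*x - y) := by
  rw [Finset.sum_Icc_succ_top (by omega : 1 ≤ N + 1), key_sum x y N N le_rfl]
  rw [show Icc (N+1) N = (∅ : Finset ℕ) from Finset.Icc_eq_empty (by omega),
    show Icc (N+1+1) (N+1) = (∅ : Finset ℕ) from Finset.Icc_eq_empty (by omega)]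
  simp only [Finset.prod_empty, mul_one, Nat.add_sub_cancel]
  ring
open Finset

namespace DetM

noncomputable def Bf (p b q : ℂ) (n m : ℕ) : ℂ := ∏ s ∈ Icc (n - m + 1) n, β p b q s

noncomputable def vv (p b q : ℂ) (n k : ℕ) : ℂ :=
  (if k < n then γ p b q (n - k) else 1) * Bf p b q n k

noncomputable def NN (p b q : ℂ) (n : ℕ) : Matrix (Fin (n+1)) (Fin (n+1)) ℂ :=
  fun i c => if (i:ℕ) < n then ((((i:ℕ)+1).descFactorial (c:ℕ) : ℕ) : ℂ) else vv p b q n (c:ℕ)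

variable {p b q : ℂ} {n : ℕ}

lemma Bf_zero : Bf p b q n 0 = 1 := by
  unfold Bf
  rw [Finset.Icc_eq_empty (by omega)]
  simp

lemma Bf_ne (hβ : ∀ j, 1 ≤ j → j ≤ n → β p b q j ≠ 0) (m : ℕ) : Bf p b q n m ≠ 0 := by
  unfold Bf
  rw [Finset.prod_ne_zero_iff]
  intro s hs
  simp only [mem_Icc] at hs
  exact hβ s (by omega) hs.2

lemma Bf_split {c m : ℕ} (h1 : c ≤ m) (h2 : m ≤ n) :
    Bf p b q n m = (∏ s ∈ Icc (n - m + 1) (n - c), β p b q s) * Bf p b q n c := by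
  unfold Bf
  rw [Finset.Icc_add_one_left_eq_Ioc, Finset.Icc_add_one_left_eq_Ioc, Finset.Icc_add_one_left_eq_Ioc]
  exact (Finset.prod_Ioc_consecutive _ (by omega) (by omega)).symm

lemma M_apply_lt (i c : Fin (n+1)) (h : (i:ℕ) < n) :
    M p b q n i c = ((((i:ℕ)+1).descFactorial (c:ℕ) : ℕ) : ℂ) *
      ∏ s ∈ Icc (n - ((i:ℕ)+1) + 1) (n - (c:ℕ)), β p b q s := by
  show (if (i:ℕ) < n then _ else _) = _
  rw [if_pos h]
  split
  · rfl
  · next hc =>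
    rw [Nat.descFactorial_eq_zero_iff_lt.mpr (by omega)]
    simp

lemma step1 (hβ : ∀ j, 1 ≤ j → j ≤ n → β p b q j ≠ 0) :
    (M p b q n).det = (NN p b q n).det := by
  have hM : M p b q n = Matrix.of (fun (i c : Fin (n+1)) =>
      (if (i:ℕ) < n then Bf p b q n ((i:ℕ)+1) else 1) *
        (Matrix.of (fun (i c : Fin (n+1)) => (Bf p b q n (c:ℕ))⁻¹ * NN p b q n i c) i c)) := by
    ext i c
    simp only [Matrix.of_apply]
    by_cases hi : (i:ℕ) < n
    · rw [if_pos hi, M_apply_lt i c hi]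
      show _ = Bf p b q n ((i:ℕ)+1) * ((Bf p b q n (c:ℕ))⁻¹ * (if (i:ℕ) < n then _ else _))
      rw [if_pos hi]
      by_cases hc : (c:ℕ) ≤ (i:ℕ) + 1
      · rw [Bf_split hc (by omega)]
        field_simp [Bf_ne hβ]
      · rw [Nat.descFactorial_eq_zero_iff_lt.mpr (by omega)]
        simp
    · show (if (i:ℕ) < n then _ else _) = _
      rw [if_neg hi]
      show _ = _ * ((Bf p b q n (c:ℕ))⁻¹ * (if (i:ℕ) < n then _ else vv p b q n (c:ℕ)))
      rw [if_neg hi, if_neg hi, vv]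
      field_simp [Bf_ne hβ]
  rw [hM, Matrix.det_mul_column, Matrix.det_mul_row]
  have h1 : (∏ i : Fin (n+1), (if (i:ℕ) < n then Bf p b q n ((i:ℕ)+1) else 1))
      = ∏ i ∈ range n, Bf p b q n (i+1) := by
    rw [Fin.prod_univ_eq_prod_range (fun i => if i < n then Bf p b q n (i+1) else 1),
      Finset.prod_range_succ, if_neg (lt_irrefl n), mul_one]
    exact Finset.prod_congr rfl fun i hi => if_pos (mem_range.mp hi)
  have h2 : (∏ i : Fin (n+1), (Bf p b q n (i:ℕ))⁻¹)
      = (∏ i ∈ range n, (Bf p b q n (i+1))⁻¹) := by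
    rw [Fin.prod_univ_eq_prod_range (fun i => (Bf p b q n i)⁻¹), Finset.prod_range_succ',
      Bf_zero, inv_one, mul_one]
  rw [h1, h2, ← mul_assoc, ← Finset.prod_mul_distrib]
  have : ∀ i ∈ range n, Bf p b q n (i+1) * (Bf p b q n (i+1))⁻¹ = 1 := fun i _ =>
    mul_inv_cancel₀ (Bf_ne hβ _)
  rw [Finset.prod_congr rfl this, Finset.prod_const_one, one_mul]

end DetM

namespace DetM

noncomputable def LL (n : ℕ) : Matrix (Fin (n+1)) (Fin (n+1)) ℂ :=
  fun i j => if (i:ℕ) < n then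
      (if (j:ℕ) ≤ (i:ℕ) then (-1:ℂ)^((i:ℕ)+(j:ℕ)) * ((((i:ℕ)+1).choose ((j:ℕ)+1) : ℕ) : ℂ) else 0)
    else (if (j:ℕ) = n then 1 else 0)

noncomputable def AA (p b q : ℂ) (n : ℕ) : Matrix (Fin (n+1)) (Fin (n+1)) ℂ :=
  fun i c => if (i:ℕ) < n then
      (if (c:ℕ) = 0 then (-1:ℂ)^(i:ℕ) else if (c:ℕ) = (i:ℕ)+1
        then ((((i:ℕ)+1).factorial : ℕ) : ℂ) else 0)
    else vv p b q n (c:ℕ)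

variable {p b q : ℂ} {n : ℕ}

lemma step2 : LL n * NN p b q n = AA p b q n := by
  ext i c
  rw [Matrix.mul_apply]
  by_cases hi : (i:ℕ) < n
  · have hsum : (∑ j : Fin (n+1), LL n i j * NN p b q n j c)
        = ∑ j ∈ range (n+1), (fun j => if j ≤ (i:ℕ) then
            (-1:ℂ)^((i:ℕ)+j) * ((((i:ℕ)+1).choose (j+1) : ℕ) : ℂ) *
              (((j+1).descFactorial (c:ℕ) : ℕ) : ℂ) else 0) j := by
      rw [← Fin.sum_univ_eq_sum_range]
      apply Finset.sum_congr rfl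
      intro j _
      show LL n i j * NN p b q n j c = _
      simp only [LL, NN, if_pos hi]
      by_cases hj : (j:ℕ) ≤ (i:ℕ)
      · rw [if_pos hj, if_pos hj, if_pos (by omega : (j:ℕ) < n)]
      · rw [if_neg hj, if_neg hj, zero_mul]
    rw [hsum]
    rw [← Finset.sum_subset (Finset.range_subset_range.mpr (by omega : (i:ℕ)+1 ≤ n+1))
      (fun j _ hj => if_neg (by simp only [mem_range] at hj; omega))]
    have : ∀ j ∈ range ((i:ℕ)+1), (if j ≤ (i:ℕ) then
            (-1:ℂ)^((i:ℕ)+j) * ((((i:ℕ)+1).choose (j+1) : ℕ) : ℂ) *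
              (((j+1).descFactorial (c:ℕ) : ℕ) : ℂ) else 0)
        = (-1:ℂ)^((i:ℕ)+j) * ((((i:ℕ)+1).choose (j+1) : ℕ) : ℂ) *
              (((j+1).descFactorial (c:ℕ) : ℕ) : ℂ) := by
      intro j hj
      exact if_pos (by simp only [mem_range] at hj; omega)
    rw [Finset.sum_congr rfl this, key_binom (i:ℕ) (c:ℕ)]
    simp only [AA, if_pos hi]
  · have : ∀ j : Fin (n+1), LL n i j * NN p b q n j c
        = if j = Fin.last n then vv p b q n (c:ℕ) else 0 := by
      intro j
      simp only [LL, NN, if_neg hi]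
      by_cases hj : (j:ℕ) = n
      · rw [if_pos hj, if_neg (by omega : ¬ (j:ℕ) < n), one_mul,
          if_pos (Fin.ext hj : j = Fin.last n)]
      · rw [if_neg hj, zero_mul, if_neg (fun h => hj (by rw [h]; rfl))]
    rw [Finset.sum_congr rfl (fun j _ => this j), Finset.sum_ite_eq' univ (Fin.last n)]
    simp only [mem_univ, if_true, AA, if_neg hi]

end DetM

namespace DetM

noncomputable def RR (n : ℕ) : Matrix (Fin (n+1)) (Fin (n+1)) ℂ :=
  fun c k => if (k:ℕ) = 0 then (-1:ℂ)^(c:ℕ) / (((c:ℕ).factorial : ℕ) : ℂ)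
    else if (k:ℕ) = (c:ℕ) then 1 else 0

noncomputable def v0 (p b q : ℂ) (n : ℕ) : ℂ :=
  ∑ k ∈ range (n+1), (-1:ℂ)^k / ((k.factorial : ℕ) : ℂ) * vv p b q n k

noncomputable def YY (p b q : ℂ) (n : ℕ) : Matrix (Fin (n+1)) (Fin (n+1)) ℂ :=
  fun i c => if (i:ℕ) < n then
      (if (c:ℕ) = (i:ℕ)+1 then ((((i:ℕ)+1).factorial : ℕ) : ℂ) else 0)
    else (if (c:ℕ) = 0 then v0 p b q n else vv p b q n (c:ℕ))

variable {p b q : ℂ} {n : ℕ}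

lemma step3 : AA p b q n * RR n = YY p b q n := by
  ext i c
  rw [Matrix.mul_apply]
  by_cases hc : (c:ℕ) = 0
  · -- column 0
    by_cases hi : (i:ℕ) < n
    · have key : ∀ j : Fin (n+1), AA p b q n i j * RR n j c
          = (if j = (0 : Fin (n+1)) then (-1:ℂ)^(i:ℕ) else 0)
            + (if j = (⟨(i:ℕ)+1, by omega⟩ : Fin (n+1)) then
                ((((i:ℕ)+1).factorial : ℕ) : ℂ) * ((-1:ℂ)^((i:ℕ)+1) / ((((i:ℕ)+1).factorial : ℕ) : ℂ)) else 0) := by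
        intro j
        simp only [AA, RR, if_pos hi, if_pos hc, Fin.ext_iff, Fin.val_zero]
        by_cases hj0 : (j:ℕ) = 0
        · by_cases hj1 : (j:ℕ) = (i:ℕ)+1
          · omega
          · simp [hj0, hj1]
        · by_cases hj1 : (j:ℕ) = (i:ℕ)+1
          · simp [hj0, hj1]
          · simp [hj0, hj1]
      rw [Finset.sum_congr rfl (fun j _ => key j), Finset.sum_add_distrib,
        Finset.sum_ite_eq' univ, Finset.sum_ite_eq' univ]
      simp only [mem_univ, if_true, YY, if_pos hi, hc]
      rw [if_neg (by omega : ¬ (0:ℕ) = (i:ℕ)+1)]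
      have hfac : ((((i:ℕ)+1).factorial : ℕ) : ℂ) ≠ 0 := by
        exact_mod_cast Nat.factorial_ne_zero _
      field_simp
      rw [pow_succ]
      ring
    · -- last row, column 0 : gives v0
      have key : ∀ j : Fin (n+1), AA p b q n i j * RR n j c
          = (fun k => vv p b q n k * ((-1:ℂ)^k / ((k.factorial : ℕ) : ℂ))) (j:ℕ) := by
        intro j
        simp only [AA, RR, if_neg hi, if_pos hc]
      rw [Finset.sum_congr rfl (fun j _ => key j),
        Fin.sum_univ_eq_sum_range (fun k => vv p b q n k * ((-1:ℂ)^k / ((k.factorial : ℕ) : ℂ))) (n+1)]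
      simp only [YY, if_neg hi, if_pos hc, v0]
      apply Finset.sum_congr rfl
      intro k _
      ring
  · -- column c ≠ 0
    have key : ∀ j : Fin (n+1), AA p b q n i j * RR n j c
        = if j = c then AA p b q n i c else 0 := by
      intro j
      simp only [RR]
      by_cases hj : (c:ℕ) = (j:ℕ)
      · have hjc : j = c := Fin.ext hj.symm
        subst hjc
        rw [if_neg hc, if_pos rfl, mul_one, if_pos rfl]
      · rw [if_neg hc, if_neg hj, mul_zero, if_neg (fun h => hj (congrArg Fin.val h).symm)]
    rw [Finset.sum_congr rfl (fun j _ => key j), Finset.sum_ite_eq' univ]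
    simp only [mem_univ, if_true]
    by_cases hi : (i:ℕ) < n
    · simp only [AA, YY, if_pos hi, if_neg hc]
    · simp only [AA, YY, if_neg hi, if_neg hc]

end DetM

namespace DetM

noncomputable def L2M (p b q : ℂ) (n : ℕ) : Matrix (Fin (n+1)) (Fin (n+1)) ℂ :=
  fun i j => if (i:ℕ) < n then (if (j:ℕ) = (i:ℕ) then 1 else 0)
    else (if (j:ℕ) < n then -(vv p b q n ((j:ℕ)+1)) / ((((j:ℕ)+1).factorial : ℕ) : ℂ) else 1)

noncomputable def dd (p b q : ℂ) (n : ℕ) : Fin (n+1) → ℂ :=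
  fun i => if (i:ℕ) < n then ((((i:ℕ)+1).factorial : ℕ) : ℂ) else v0 p b q n

variable {p b q : ℂ} {n : ℕ}

lemma permMatrix_apply (i c : Fin (n+1)) :
    ((finRotate (n+1)).permMatrix ℂ) i c = if finRotate (n+1) i = c then 1 else 0 := by
  simp only [Equiv.Perm.permMatrix, PEquiv.toMatrix_apply, Equiv.toPEquiv_apply,
    Option.mem_def, Option.some.injEq]

lemma step4 : L2M p b q n * YY p b q n
    = Matrix.diagonal (dd p b q n) * ((finRotate (n+1)).permMatrix ℂ) := by
  ext i c
  rw [Matrix.mul_apply, Matrix.diagonal_mul, permMatrix_apply]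
  by_cases hi : (i:ℕ) < n
  · have key : ∀ j : Fin (n+1), L2M p b q n i j * YY p b q n j c
        = if j = i then YY p b q n i c else 0 := by
      intro j
      simp only [L2M, if_pos hi]
      by_cases hj : (j:ℕ) = (i:ℕ)
      · have : j = i := Fin.ext hj
        subst this
        rw [if_pos rfl, if_pos rfl, one_mul]
      · rw [if_neg hj, zero_mul, if_neg (fun h => hj (congrArg Fin.val h))]
    rw [Finset.sum_congr rfl (fun j _ => key j), Finset.sum_ite_eq' univ]
    simp only [mem_univ, if_true]
    have hrot : (finRotate (n+1) i : ℕ) = (i:ℕ) + 1 := by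
      apply coe_finRotate_of_ne_last
      intro h
      have := congrArg Fin.val h
      rw [Fin.val_last] at this
      omega
    have hcond : (finRotate (n+1) i = c) ↔ ((c:ℕ) = (i:ℕ)+1) := by
      rw [Fin.ext_iff, hrot]
      exact ⟨fun h => h.symm, fun h => h.symm⟩
    simp only [YY, if_pos hi, dd]
    by_cases hc : (c:ℕ) = (i:ℕ)+1
    · rw [if_pos hc, if_pos (hcond.mpr hc), mul_one]
    · rw [if_neg hc, if_neg (fun h => hc (hcond.mp h)), mul_zero]
  · -- last row
    have hival : (i:ℕ) = n := by omega
    have hlast : i = Fin.last n := Fin.ext (by rw [Fin.val_last]; exact hival)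
    have hrot : finRotate (n+1) i = 0 := by
      rw [hlast, finRotate_succ_apply, Fin.last_add_one]
    by_cases hc : (c:ℕ) = 0
    · have hc0 : c = 0 := Fin.ext hc
      have key : ∀ j : Fin (n+1), L2M p b q n i j * YY p b q n j c
          = if j = Fin.last n then v0 p b q n else 0 := by
        intro j
        simp only [L2M, YY, if_neg hi]
        by_cases hj : (j:ℕ) < n
        · rw [if_pos hj, if_pos hj, if_neg (by omega : ¬ (c:ℕ) = (j:ℕ)+1), mul_zero,
            if_neg (fun h => by rw [h, Fin.val_last] at hj; omega)]
        · rw [if_neg hj, if_neg hj, if_pos hc, one_mul,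
            if_pos (Fin.ext (by rw [Fin.val_last]; omega) : j = Fin.last n)]
      rw [Finset.sum_congr rfl (fun j _ => key j), Finset.sum_ite_eq' univ]
      simp only [mem_univ, if_true, dd, if_neg hi, if_pos (hrot.trans hc0.symm ▸ rfl : finRotate (n+1) i = c)]
      rw [mul_one]
    · -- c ≠ 0 : sum is zero
      have hcn : 1 ≤ (c:ℕ) ∧ (c:ℕ) ≤ n := ⟨by omega, by omega⟩
      have key : ∀ j : Fin (n+1), L2M p b q n i j * YY p b q n j c
          = (if j = (⟨(c:ℕ)-1, by omega⟩ : Fin (n+1)) then -(vv p b q n (c:ℕ)) else 0)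
            + (if j = Fin.last n then vv p b q n (c:ℕ) else 0) := by
        intro j
        simp only [L2M, YY, if_neg hi]
        by_cases hj : (j:ℕ) < n
        · rw [if_pos hj, if_pos hj]
          by_cases hjc : (c:ℕ) = (j:ℕ) + 1
          · rw [if_pos hjc]
            have hjeq : j = (⟨(c:ℕ)-1, by omega⟩ : Fin (n+1)) := Fin.ext (by simp; omega)
            rw [if_pos hjeq,
              if_neg (show ¬ j = Fin.last n from fun h => by rw [h, Fin.val_last] at hj; omega),
              add_zero]
            have hfac : ((((j:ℕ)+1).factorial : ℕ) : ℂ) ≠ 0 := by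
              exact_mod_cast Nat.factorial_ne_zero _
            rw [show (c:ℕ) = (j:ℕ)+1 from hjc]
            field_simp
          · rw [if_neg hjc, mul_zero,
              if_neg (show ¬ j = (⟨(c:ℕ)-1, by omega⟩ : Fin (n+1)) from fun h => by
                have := congrArg Fin.val h
                simp only at this
                omega),
              if_neg (show ¬ j = Fin.last n from fun h => by rw [h, Fin.val_last] at hj; omega)]
            ring
        · rw [if_neg hj, if_neg hj, if_neg hc, one_mul,
            if_pos (Fin.ext (by rw [Fin.val_last]; omega) : j = Fin.last n),
            if_neg (show ¬ j = (⟨(c:ℕ)-1, by omega⟩ : Fin (n+1)) from fun h => by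
              have := congrArg Fin.val h
              simp only at this
              omega)]
          ring
      rw [Finset.sum_congr rfl (fun j _ => key j), Finset.sum_add_distrib,
        Finset.sum_ite_eq' univ, Finset.sum_ite_eq' univ]
      simp only [mem_univ, if_true]
      rw [if_neg (fun h => hc (by rw [← h, hrot]; rfl)), mul_zero]
      ring

end DetM

namespace DetM

variable {p b q : ℂ} {n : ℕ}

lemma fin_lt_val {i j : Fin (n+1)} (h : i < j) : (i:ℕ) < (j:ℕ) := h

lemma det_LL : (LL n).det = 1 := by
  rw [Matrix.det_of_lowerTriangular (LL n) (fun i j hij => by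
    have h : i < j := OrderDual.toDual_lt_toDual.mp hij
    have hv : (i:ℕ) < (j:ℕ) := Fin.lt_def.mp h
    have hj2 := j.isLt
    simp only [LL]
    by_cases hi : (i:ℕ) < n
    · rw [if_pos hi, if_neg (by omega)]
    · omega)]
  apply Finset.prod_eq_one
  intro i _
  simp only [LL]
  by_cases hi : (i:ℕ) < n
  · rw [if_pos hi, if_pos le_rfl, Nat.choose_self, Even.neg_one_pow ⟨(i:ℕ), rfl⟩]
    simp
  · rw [if_neg hi, if_pos (by omega)]

lemma det_RR : (RR n).det = 1 := by
  rw [Matrix.det_of_lowerTriangular (RR n) (fun i j hij => by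
    have h : i < j := OrderDual.toDual_lt_toDual.mp hij
    have hv : (i:ℕ) < (j:ℕ) := Fin.lt_def.mp h
    simp only [RR]
    rw [if_neg (by omega), if_neg (by omega)])]
  apply Finset.prod_eq_one
  intro i _
  simp only [RR]
  by_cases hi : (i:ℕ) = 0
  · rw [if_pos hi, hi]
    simp
  · simp [hi]

lemma det_L2M : (L2M p b q n).det = 1 := by
  rw [Matrix.det_of_lowerTriangular (L2M p b q n) (fun i j hij => by
    have h : i < j := OrderDual.toDual_lt_toDual.mp hij
    have hv : (i:ℕ) < (j:ℕ) := Fin.lt_def.mp h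
    have hj2 := j.isLt
    simp only [L2M]
    by_cases hi : (i:ℕ) < n
    · rw [if_pos hi, if_neg (by omega)]
    · omega)]
  apply Finset.prod_eq_one
  intro i _
  have hi2 := i.isLt
  simp only [L2M]
  by_cases hi : (i:ℕ) < n
  · simp [hi]
  · rw [if_neg hi, if_neg (by omega)]

lemma detM_generic (hβ : ∀ j, 1 ≤ j → j ≤ n → β p b q j ≠ 0) :
    (M p b q n).det = (-1:ℂ)^n * v0 p b q n *
      ∏ i ∈ range n, (((i+1).factorial : ℕ) : ℂ) := by
  have h1 : (M p b q n).det = (NN p b q n).det := step1 hβ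
  have h2 : (NN p b q n).det = (AA p b q n).det := by
    have := congrArg Matrix.det (step2 (p := p) (b := b) (q := q) (n := n))
    rwa [Matrix.det_mul, det_LL, one_mul] at this
  have h3 : (AA p b q n).det = (YY p b q n).det := by
    have := congrArg Matrix.det (step3 (p := p) (b := b) (q := q) (n := n))
    rwa [Matrix.det_mul, det_RR, mul_one] at this
  have h4 : (YY p b q n).det
      = (Matrix.diagonal (dd p b q n) * ((finRotate (n+1)).permMatrix ℂ)).det := by
    have := congrArg Matrix.det (step4 (p := p) (b := b) (q := q) (n := n))
    rwa [Matrix.det_mul, det_L2M, one_mul] at this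
  rw [h1, h2, h3, h4, Matrix.det_mul, Matrix.det_diagonal, Matrix.det_permutation,
    sign_finRotate]
  have hprod : (∏ i : Fin (n+1), dd p b q n i)
      = (∏ i ∈ range n, (((i+1).factorial : ℕ) : ℂ)) * v0 p b q n := by
    simp only [dd]
    rw [Fin.prod_univ_eq_prod_range (fun i => if i < n then (((i+1).factorial : ℕ) : ℂ) else v0 p b q n),
      Finset.prod_range_succ, if_neg (lt_irrefl n)]
    congr 1
    exact Finset.prod_congr rfl fun i hi => if_pos (mem_range.mp hi)
  rw [hprod]
  push_cast
  ring

end DetM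

namespace DetM

variable {p b q : ℂ} {n : ℕ}

lemma natProdIcc : ∀ (m a : ℕ), a ≤ m → (∏ s ∈ Icc (a+1) m, s) * a.factorial = m.factorial := by
  intro m
  induction m with
  | zero =>
    intro a ha
    interval_cases a
    simp
  | succ m ih =>
    intro a ha
    by_cases h : a = m + 1
    · subst h
      rw [Finset.Icc_eq_empty (by omega)]
      simp
    · have ham : a ≤ m := by omega
      rw [Finset.prod_Icc_succ_top (by omega : a + 1 ≤ m + 1), mul_comm _ (m+1),
        mul_assoc, ih a ham, Nat.factorial_succ]

lemma prodIccCast {a m : ℕ} (h : a ≤ m) :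
    (∏ s ∈ Icc (a+1) m, (s:ℂ)) * (a.factorial : ℂ) = (m.factorial : ℂ) := by
  have := natProdIcc m a h
  have h2 : (((∏ s ∈ Icc (a+1) m, s) * a.factorial : ℕ) : ℂ) = (m.factorial : ℂ) := by rw [this]
  push_cast at h2
  exact h2

lemma beta_eq (j : ℕ) :
    β p b q j = (j:ℂ) * ((j:ℂ) * ((-p-b)/2) - ((b-p)/2 + q)) := by
  unfold β; ring

lemma gamma_eq (j : ℕ) :
    γ p b q j = (j.factorial : ℂ) * (((-p-b)/2) + ((b-p)/2 + q)) * ((-p-b)/2)^(j-1) := by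
  unfold γ; ring_nf

lemma Bf_eq {k : ℕ} (hk : k ≤ n) :
    Bf p b q n k * ((n-k).factorial : ℂ)
      = (n.factorial : ℂ) * ∏ s ∈ Icc (n-k+1) n, ((s:ℂ) * ((-p-b)/2) - ((b-p)/2 + q)) := by
  unfold Bf
  have h1 : ∀ s ∈ Icc (n-k+1) n, β p b q s
      = (s:ℂ) * ((s:ℂ) * ((-p-b)/2) - ((b-p)/2 + q)) := fun s _ => beta_eq s
  rw [Finset.prod_congr rfl h1, Finset.prod_mul_distrib]
  rw [mul_right_comm, prodIccCast (by omega : n - k ≤ n)]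

end DetM

namespace DetM

variable {p b q : ℂ} {n : ℕ}

lemma term_arith (K J B D P u a a' s T : ℂ) (hK : K ≠ 0) (hJ : J ≠ 0)
    (h1 : B * J = T * P) (h2 : D * K = T) (h3 : a * a' = s) (ha' : a' * a' = 1) :
    a / K * (J * u * B) = s * u * (a' * D * P) := by
  rw [div_mul_eq_mul_div, div_eq_iff hK]
  linear_combination (u*a)*h1 - (u*a*P)*h2 - (u*D*P*K*a)*ha' + (u*D*P*K*a')*h3

lemma v0_eq (N : ℕ) : v0 p b q (N+1)
    = (-1:ℂ)^(N+1) * (-(((N:ℂ)+1)+1) * ((b-p)/2 + q)) *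
      ∏ j ∈ Icc 1 N, ((j:ℂ)*((-p-b)/2) - ((b-p)/2 + q)) := by
  unfold v0
  rw [Finset.sum_range_succ]
  have hlast : (-1:ℂ)^(N+1) / (((N+1).factorial : ℕ) : ℂ) * vv p b q (N+1) (N+1)
      = (-1:ℂ)^(N+1) * ∏ s ∈ Icc 1 (N+1), ((s:ℂ)*((-p-b)/2) - ((b-p)/2 + q)) := by
    unfold vv
    rw [if_neg (lt_irrefl (N+1)), one_mul]
    have hBf := Bf_eq (p := p) (b := b) (q := q) (le_refl (N+1))
    simp only [Nat.sub_self, Nat.factorial_zero, Nat.cast_one, mul_one, zero_add] at hBf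
    rw [hBf]
    have hfac : (((N+1).factorial : ℕ) : ℂ) ≠ 0 := by exact_mod_cast Nat.factorial_ne_zero _
    rw [div_mul_eq_mul_div, div_eq_iff hfac]
    ring
  have hmain : (∑ k ∈ range (N+1), (-1:ℂ)^k / ((k.factorial : ℕ) : ℂ) * vv p b q (N+1) k)
      = ∑ j ∈ Icc 1 (N+1), (-1:ℂ)^(N+1) * (((-p-b)/2) + ((b-p)/2 + q)) *
          ((-1:ℂ)^j * ((-p-b)/2)^(j-1) * (((N+1).descFactorial j : ℕ) : ℂ) *
            ∏ s ∈ Icc (j+1) (N+1), ((s:ℂ)*((-p-b)/2) - ((b-p)/2 + q))) := by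
    apply Finset.sum_nbij' (fun k => N+1-k) (fun j => N+1-j)
    · intro k hk; simp only [mem_range] at hk; simp only [mem_Icc]; omega
    · intro j hj; simp only [mem_Icc] at hj; simp only [mem_range]; omega
    · intro k hk; simp only [mem_range] at hk; omega
    · intro j hj; simp only [mem_Icc] at hj; omega
    · intro k hk
      simp only [mem_range] at hk
      unfold vv
      rw [if_pos (show k < N+1 from hk), gamma_eq]
      have h1 := Bf_eq (p := p) (b := b) (q := q) (show k ≤ N+1 by omega)
      have h2 : (((N+1).descFactorial (N+1-k) : ℕ) : ℂ) * ((k.factorial : ℕ) : ℂ)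
          = (((N+1).factorial : ℕ) : ℂ) := by
        have hh := Nat.factorial_mul_descFactorial (show N+1-k ≤ N+1 by omega)
        rw [show N+1-(N+1-k) = k by omega, mul_comm] at hh
        exact_mod_cast congrArg (Nat.cast : ℕ → ℂ) hh
      have h3 : (-1:ℂ)^k * (-1:ℂ)^(N+1-k) = (-1:ℂ)^(N+1) := by
        rw [← pow_add, show k + (N+1-k) = N+1 by omega]
      have ha' : (-1:ℂ)^(N+1-k) * (-1:ℂ)^(N+1-k) = 1 := by
        rw [← pow_add]; exact Even.neg_one_pow ⟨N+1-k, rfl⟩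
      have hK : ((k.factorial : ℕ) : ℂ) ≠ 0 := by exact_mod_cast Nat.factorial_ne_zero _
      rw [div_mul_eq_mul_div, div_eq_iff hK]
      linear_combination
        ((((-p-b)/2) + ((b-p)/2 + q)) * ((-p-b)/2)^(N+1-k-1) * (-1:ℂ)^k) * h1
        - ((((-p-b)/2) + ((b-p)/2 + q)) * ((-p-b)/2)^(N+1-k-1) * (-1:ℂ)^k *
            (∏ s ∈ Icc (N+1-k+1) (N+1), ((s:ℂ)*((-p-b)/2) - ((b-p)/2 + q)))) * h2
        - ((((-p-b)/2) + ((b-p)/2 + q)) * ((-p-b)/2)^(N+1-k-1) *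
            (((N+1).descFactorial (N+1-k) : ℕ) : ℂ) *
            (∏ s ∈ Icc (N+1-k+1) (N+1), ((s:ℂ)*((-p-b)/2) - ((b-p)/2 + q))) *
            ((k.factorial : ℕ) : ℂ) * (-1:ℂ)^k) * ha'
        + ((((-p-b)/2) + ((b-p)/2 + q)) * ((-p-b)/2)^(N+1-k-1) *
            (((N+1).descFactorial (N+1-k) : ℕ) : ℂ) *
            (∏ s ∈ Icc (N+1-k+1) (N+1), ((s:ℂ)*((-p-b)/2) - ((b-p)/2 + q))) *
            ((k.factorial : ℕ) : ℂ) * (-1:ℂ)^(N+1-k)) * h3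
  rw [hmain, hlast, ← Finset.mul_sum, key_full ((-p-b)/2) ((b-p)/2 + q) N,
    Finset.prod_Icc_succ_top (by omega : 1 ≤ N + 1)]
  push_cast
  ring

end DetM

namespace DetM

theorem det_M_generic (p b q : ℂ) (n : ℕ) (hn : 1 ≤ n)
    (hβ : ∀ j, 1 ≤ j → j ≤ n → β p b q j ≠ 0) :
    (M p b q n).det = ((n + 1).choose 2 : ℂ) * (p - b - 2 * q) *
      ∏ j ∈ Finset.Icc 1 (n - 1), (Nat.factorial j : ℂ) * β p b q j := by
  obtain ⟨N, rfl⟩ : ∃ N, n = N + 1 := ⟨n - 1, by omega⟩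
  rw [detM_generic hβ, v0_eq]
  have hprodβ : ∏ j ∈ Icc 1 N, ((j.factorial : ℂ) * β p b q j)
      = ((∏ j ∈ Icc 1 N, ((j.factorial : ℕ) : ℂ)) * ((N.factorial : ℕ) : ℂ)) *
        ∏ j ∈ Icc 1 N, ((j:ℂ)*((-p-b)/2) - ((b-p)/2 + q)) := by
    have h1 : ∀ j ∈ Icc 1 N, (j.factorial : ℂ) * β p b q j
        = ((j.factorial : ℂ) * (j:ℂ)) * ((j:ℂ)*((-p-b)/2) - ((b-p)/2 + q)) := by
      intro j _; rw [beta_eq]; ring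
    rw [Finset.prod_congr rfl h1, Finset.prod_mul_distrib, Finset.prod_mul_distrib]
    have h2 : (∏ j ∈ Icc 1 N, (j:ℂ)) = ((N.factorial : ℕ) : ℂ) := by
      have h3 := prodIccCast (show 0 ≤ N by omega)
      simpa using h3
    rw [h2]
  have e1 : (∏ i ∈ range (N+1), (((i+1).factorial : ℕ) : ℂ))
      = (∏ j ∈ Icc 1 N, ((j.factorial : ℕ) : ℂ)) * (((N+1).factorial : ℕ) : ℂ) := by
    rw [Finset.prod_range_succ]
    congr 1
    rw [← Finset.Ico_add_one_right_eq_Icc, Finset.prod_Ico_eq_prod_range,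
      show N + 1 - 1 = N by omega]
    apply Finset.prod_congr rfl
    intro i _
    rw [Nat.add_comm 1 i]
  rw [show Icc 1 (N+1-1) = Icc 1 N by rw [show N+1-1 = N by omega], hprodβ, e1]
  have hch : (((N+1+1).choose 2 : ℕ) : ℂ) = ((N:ℂ)+2) * ((N:ℂ)+1) / 2 := by
    rw [Nat.cast_choose_two]
    push_cast
    ring
  have hfs : (((N+1).factorial : ℕ) : ℂ) = ((N:ℂ)+1) * ((N.factorial : ℕ) : ℂ) := by
    rw [Nat.factorial_succ]; push_cast; ring
  rw [hfs]
  have hsq : (-1:ℂ)^(N+1) * (-1:ℂ)^(N+1) = 1 := by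
    rw [← pow_add]; exact Even.neg_one_pow ⟨N+1, rfl⟩
  push_cast [hch]
  linear_combination ((-(((N:ℂ)+1)+1) * ((b-p)/2 + q)) *
    (∏ j ∈ Icc 1 N, ((j:ℂ)*((-p-b)/2) - ((b-p)/2 + q))) *
    (∏ j ∈ Icc 1 N, ((j.factorial : ℕ) : ℂ)) * (((N:ℂ)+1) * ((N.factorial : ℕ):ℂ))) * hsq

end DetM

namespace DetM
open Polynomial

noncomputable def βP (p b : ℂ) (j : ℕ) : Polynomial ℂ :=
  Polynomial.C (-(j:ℂ)) * (Polynomial.C (((j:ℂ)+1)/2*b + ((j:ℂ)-1)/2*p) + Polynomial.X)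

noncomputable def γP (p b : ℂ) (j : ℕ) : Polynomial ℂ :=
  Polynomial.C ((j.factorial : ℂ)) * (Polynomial.X - Polynomial.C p) *
    Polynomial.C (((-p-b)/2)^(j-1))

noncomputable def MP (p b : ℂ) (n : ℕ) : Matrix (Fin (n+1)) (Fin (n+1)) (Polynomial ℂ) :=
  fun i c =>
    if (i : ℕ) < n then
      if (c : ℕ) ≤ (i : ℕ) + 1 then
        Polynomial.C ((((i:ℕ)+1).descFactorial (c:ℕ) : ℕ) : ℂ) *
          ∏ s ∈ Icc (n - ((i:ℕ)+1) + 1) (n - (c:ℕ)), βP p b s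
      else 0
    else
      if (c : ℕ) < n then γP p b (n - (c:ℕ)) else 1

noncomputable def RHSP (p b : ℂ) (n : ℕ) : Polynomial ℂ :=
  Polynomial.C (((n+1).choose 2 : ℕ) : ℂ) *
    (Polynomial.C (p - b) - Polynomial.C 2 * Polynomial.X) *
    ∏ j ∈ Icc 1 (n-1), (Polynomial.C ((j.factorial : ℕ) : ℂ) * βP p b j)

lemma eval_βP (p b t : ℂ) (j : ℕ) : Polynomial.eval t (βP p b j) = β p b t j := by
  simp [βP, β]

lemma eval_γP (p b t : ℂ) (j : ℕ) : Polynomial.eval t (γP p b j) = γ p b t j := by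
  simp [γP, γ]

lemma evalMatrix (p b t : ℂ) (n : ℕ) :
    (MP p b n).map (Polynomial.eval t) = M p b t n := by
  ext i c
  simp only [Matrix.map_apply, MP, M]
  split_ifs <;> simp [Polynomial.eval_prod, eval_βP, eval_γP]

lemma eval_detMP (p b t : ℂ) (n : ℕ) :
    Polynomial.eval t (MP p b n).det = (M p b t n).det := by
  have h := RingHom.map_det (Polynomial.evalRingHom t) (MP p b n)
  rw [RingHom.mapMatrix_apply] at h
  rw [show (Polynomial.evalRingHom t : Polynomial ℂ →+* ℂ) (MP p b n).det
      = Polynomial.eval t (MP p b n).det from rfl] at h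
  rw [h]
  congr 1
  rw [show (MP p b n).map (Polynomial.evalRingHom t) = (MP p b n).map (Polynomial.eval t) from rfl,
    evalMatrix]

lemma eval_RHSP (p b t : ℂ) (n : ℕ) :
    Polynomial.eval t (RHSP p b n)
      = ((n + 1).choose 2 : ℂ) * (p - b - 2 * t) *
        ∏ j ∈ Icc 1 (n-1), ((j.factorial : ℂ) * β p b t j) := by
  simp only [RHSP, Polynomial.eval_mul, Polynomial.eval_sub, Polynomial.eval_C,
    Polynomial.eval_X, Polynomial.eval_prod, eval_βP]

end DetM

theorem det_M (p b q : ℂ) (n : ℕ) (hn : 1 ≤ n) :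
    (M p b q n).det = ((n + 1).choose 2 : ℂ) * (p - b - 2 * q) *
      ∏ j ∈ Finset.Icc 1 (n - 1), (Nat.factorial j : ℂ) * β p b q j := by
  classical
  have key : (DetM.MP p b n).det = DetM.RHSP p b n := by
    apply Polynomial.eq_of_infinite_eval_eq
    have hsub : (↑((Icc 1 n).image
          (fun j : ℕ => -((((j:ℂ))+1)/2*b + (((j:ℂ))-1)/2*p))) : Set ℂ)ᶜ
        ⊆ {t | Polynomial.eval t (DetM.MP p b n).det
            = Polynomial.eval t (DetM.RHSP p b n)} := by
      intro t ht
      simp only [Set.mem_compl_iff, Finset.coe_image, Set.mem_image, Finset.mem_coe,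
        Finset.mem_Icc, not_exists, not_and] at ht
      have hβ : ∀ j, 1 ≤ j → j ≤ n → β p b t j ≠ 0 := by
        intro j h1 h2 h0
        have hj : (j:ℂ) ≠ 0 := by exact_mod_cast (by omega : j ≠ 0)
        have hinner : (((j:ℂ))+1)/2*b + (((j:ℂ))-1)/2*p + t = 0 := by
          rcases mul_eq_zero.mp h0 with h | h
          · exact absurd (neg_eq_zero.mp h) hj
          · exact h
        exact ht j ⟨h1, h2⟩ (by linear_combination -hinner)
      show Polynomial.eval t (DetM.MP p b n).det = Polynomial.eval t (DetM.RHSP p b n)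
      rw [DetM.eval_detMP, DetM.eval_RHSP, DetM.det_M_generic p b t n hn hβ]
    exact Set.Infinite.mono hsub (Set.Finite.infinite_compl (Finset.finite_toSet _))
  have hq := congrArg (Polynomial.eval q) key
  rw [DetM.eval_detMP, DetM.eval_RHSP] at hq
  exact hq
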